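/- Let M1 and M2 be equivalent deterministic top-down tree transducers with state sets Q1 and Q2 and common domain D, and let h be the maximal height of the right-hand side of any rule of M1 or M2. Then M1 and M2 have height-balance bounded by c = 2^{|Q1|+|Q2|}·h: for every s ∈ D and every node u of s, |height(M1(s[u←x])) − height(M2(s[u←x]))| ≤ c. -/

import Mathlib

/-! ## Finite ordered ranked trees -/

/-- Finite ordered labeled trees. -/
inductive RTree (α : Type) : Type
  | node : α → List (RTree α) → RTree α

namespace RTree

variable {α β : Type}

/-- The label of the root node. -/
def label : RTree α → α
  | node a _ => a

mutual
  /-- The size (number of nodes) of a tree. -/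
  def size : RTree α → ℕ
    | node _ ts => 1 + sizeList ts
  def sizeList : List (RTree α) → ℕ
    | [] => 0
    | t :: ts => size t + sizeList ts
end

mutual
  /-- The height of a tree (a leaf has height 1). -/
  def height : RTree α → ℕ
    | node _ ts => 1 + heightList ts
  def heightList : List (RTree α) → ℕ
    | [] => 0
    | t :: ts => max (height t) (heightList ts)
end

mutual
  /-- Relabeling of a tree. -/
  def map (f : α → β) : RTree α → RTree β
    | node a ts => node (f a) (mapList f ts)
  def mapList (f : α → β) : List (RTree α) → List (RTree β)
    | [] => []
    | t :: ts => map f t :: mapList f ts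
end

/-- `WF rk t` means `t` is a tree over the ranked alphabet with rank function `rk`:
every node labeled `a` has exactly `rk a` children.  Thus `T_Σ = {t | WF rk t}`. -/
inductive WF (rk : α → ℕ) : RTree α → Prop
  | node {a : α} {ts : List (RTree α)} :
      ts.length = rk a → (∀ t ∈ ts, WF rk t) → WF rk (node a ts)

/-- `SubtreeAt t u r`: `u` is (the Dewey path of) a node of `t` and `r` is the
subtree of `t` rooted at `u`. -/
inductive SubtreeAt : RTree α → List ℕ → RTree α → Prop
  | here (t : RTree α) : SubtreeAt t [] t
  | child {a : α} {ts : List (RTree α)} {i : ℕ} {u : List ℕ} {ti r : RTree α} :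
      ts[i]? = some ti → SubtreeAt ti u r → SubtreeAt (node a ts) (i :: u) r

/-- `ReplaceAt t u r t'`: `u` is a node of `t`, and `t'` is the tree `t[u ← r]`
obtained from `t` by replacing the subtree rooted at `u` by `r`. -/
inductive ReplaceAt : RTree α → List ℕ → RTree α → RTree α → Prop
  | here (t r : RTree α) : ReplaceAt t [] r r
  | child {a : α} {ts : List (RTree α)} {i : ℕ} {u : List ℕ} {r ti ti' : RTree α} :
      ts[i]? = some ti → ReplaceAt ti u r ti' →
      ReplaceAt (node a ts) (i :: u) r (node a (ts.set i ti'))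

end RTree

/-- A (complete) deterministic finite-state bottom-up tree automaton over the
alphabet `S`, with state set `P` and final states `final`. -/
structure BUA (S P : Type) where
  delta : S → List P → P
  final : Set P

variable {S P : Type}

mutual
  /-- The state reached by a bottom-up automaton on a tree. -/
  def buaRun (A : BUA S P) : RTree S → P
    | .node a ts => A.delta a (buaRunList A ts)
  def buaRunList (A : BUA S P) : List (RTree S) → List P
    | [] => []
    | t :: ts => buaRun A t :: buaRunList A ts
end

/-- A tree language over the ranked alphabet `(S, rk)` is regular if it is recognized
by a deterministic finite-state bottom-up tree automaton. -/
def RegularTreeLang (rk : S → ℕ) (L : Set (RTree S)) : Prop :=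
  ∃ (P : Type) (_ : Fintype P) (A : BUA S P),
    L = {t | RTree.WF rk t ∧ buaRun A t ∈ A.final}
/-! ## Deterministic macro tree transducers

A state of rank `m+1` is encoded by `prm q = m` (its number of context parameters).
Right-hand sides of rules are trees over `Δ ∪ Q ∪ X ∪ Y`, where every `Q`-labeled
node has an input variable `x_i` as its (implicit) first child; this is encoded by
the constructor `MRhs.call q i ps`.  A top-down tree transducer is exactly a macro
tree transducer all of whose states have rank one (`prm q = 0`).

To be able to talk about partial inputs `s[u ← x]`, input trees are trees over
`Option S`, where `none` plays the role of the fresh rank-0 symbol `x`; an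
ordinary input tree `s` is represented as `RTree.map some s`.  Outputs (sentential
forms) are trees over the alphabet `PL Q D`: output symbols `PL.out d`, unresolved
state calls `PL.st q` (i.e. `q(x, t₁, …, t_m)`, whose children are the current
parameter trees), and formal context parameters `PL.pr j` (i.e. `y_{j+1}`). -/

/-- Labels of sentential forms produced by a macro tree transducer. -/
inductive PL (Q D : Type) : Type
  | out : D → PL Q D
  | st : Q → PL Q D
  | pr : ℕ → PL Q D

/-- Right-hand sides of rules of a macro tree transducer with states `Q` and output
alphabet `D`: `out d ts` is an output symbol with subtrees, `param j` is the context
parameter `y_{j+1}`, and `call q i ps` is a state call `q(x_{i+1}, ps)`. -/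
inductive MRhs (Q D : Type) : Type
  | out : D → List (MRhs Q D) → MRhs Q D
  | param : ℕ → MRhs Q D
  | call : Q → ℕ → List (MRhs Q D) → MRhs Q D

/-- Well-formedness of a right-hand side for a rule of a state with `m` parameters
and an input symbol of rank `k`: output symbols have the right number of children,
parameters are among `y_1, …, y_m`, input variables are among `x_1, …, x_k`, and a
call of state `q'` passes exactly `prm q'` parameter trees. -/
inductive RhsWF {Q D : Type} (rkD : D → ℕ) (prm : Q → ℕ) (k m : ℕ) : MRhs Q D → Prop
  | out {d ts} : ts.length = rkD d → (∀ t ∈ ts, RhsWF rkD prm k m t) →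
      RhsWF rkD prm k m (.out d ts)
  | param {j} : j < m → RhsWF rkD prm k m (.param j)
  | call {q i ps} : i < k → ps.length = prm q → (∀ t ∈ ps, RhsWF rkD prm k m t) →
      RhsWF rkD prm k m (.call q i ps)

/-- A deterministic macro tree transducer with states `Q`, input alphabet `(S, rkS)`
and output alphabet `(D, rkD)`.  `prm q` is the number of context parameters of
state `q` (so `q` has rank `prm q + 1`); `rules q σ` is the right-hand side of the
`(q,σ)`-rule, if present (determinism: at most one rule per pair). -/
structure MTT (Q S D : Type) where
  rkS : S → ℕ
  rkD : D → ℕ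
  prm : Q → ℕ
  init : Q
  rules : Q → S → Option (MRhs Q D)

namespace MTT

variable {Q S D : Type}

/-- `M` is a well-formed macro tree transducer: the initial state has rank one and
all right-hand sides are well-formed. -/
def Proper (M : MTT Q S D) : Prop :=
  M.prm M.init = 0 ∧
    ∀ q σ r, M.rules q σ = some r → RhsWF M.rkD M.prm (M.rkS σ) (M.prm q) r

/-- `M` is total: there is exactly one rule for every state and input symbol. -/
def Total (M : MTT Q S D) : Prop := ∀ q σ, (M.rules q σ).isSome

end MTT

/-- A top-down tree transducer is a macro tree transducer each of whose states has
rank one, i.e. no context parameters. -/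
def IsTopDown {Q S D : Type} (M : MTT Q S D) : Prop := ∀ q, M.prm q = 0

/-- A macro tree transducer is monadic if its input and output ranked alphabets
only contain symbols of rank 1 and rank 0. -/
def MTT.Monadic {Q S D : Type} (M : MTT Q S D) : Prop :=
  (∀ σ, M.rkS σ ≤ 1) ∧ (∀ d, M.rkD d ≤ 1)

variable {Q S D : Type}

mutual
  /-- Second-order substitution of the parameter leaves `y_{j+1}` of a sentential
  form by the trees `vs`. -/
  def psubst (vs : List (RTree (PL Q D))) : RTree (PL Q D) → RTree (PL Q D)
    | .node (.pr j) _ => vs.getD j (.node (.pr j) [])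
    | .node (.out d) ts => .node (.out d) (psubstList vs ts)
    | .node (.st q) ts => .node (.st q) (psubstList vs ts)
  def psubstList (vs : List (RTree (PL Q D))) :
      List (RTree (PL Q D)) → List (RTree (PL Q D))
    | [] => []
    | t :: ts => psubst vs t :: psubstList vs ts
end

/-- The fresh rank-0 input symbol `x` used in partial inputs `s[u ← x]`. -/
def xLeaf {S : Type} : RTree (Option S) := .node none []

mutual
  /-- Big-step semantics of a macro tree transducer: `MEval M q s t` means that the
  computation of `M` started in state `q` on the input tree `s` (a tree over
  `Option S`, where `none` is the fresh symbol `x` of partial inputs) produces the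
  (sentential form) tree `t`.  On the symbol `x` the computation blocks, yielding
  the unresolved call `q(x, y_1, …, y_m)`.  For `s ∈ T_Σ` (no occurrence of `x`)
  and well-formed transducers, `t` contains no `PL.st` labels, and `M_q(s)` is
  defined iff such a `t` exists; determinism makes `t` unique. -/
  inductive MEval (M : MTT Q S D) : Q → RTree (Option S) → RTree (PL Q D) → Prop
    | atX (q : Q) :
        MEval M q (.node none [])
          (.node (.st q) ((List.range (M.prm q)).map fun j => .node (.pr j) []))
    | step {q : Q} {σ : S} {ss : List (RTree (Option S))} {r : MRhs Q D}
        {t : RTree (PL Q D)} :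
        M.rules q σ = some r → MExpand M ss r t → MEval M q (.node (some σ) ss) t

  /-- Evaluation of a right-hand side with current input subtrees `ss`. -/
  inductive MExpand (M : MTT Q S D) :
      List (RTree (Option S)) → MRhs Q D → RTree (PL Q D) → Prop
    | out {ss d ts us} : MExpandList M ss ts us →
        MExpand M ss (.out d ts) (.node (.out d) us)
    | param {ss j} : MExpand M ss (.param j) (.node (.pr j) [])
    | call {ss : List (RTree (Option S))} {q : Q} {i : ℕ} {ps : List (MRhs Q D)}
        {si : RTree (Option S)} {vs : List (RTree (PL Q D))} {u : RTree (PL Q D)} :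
        ss[i]? = some si → MExpandList M ss ps vs → MEval M q si u →
        MExpand M ss (.call q i ps) (psubst vs u)

  inductive MExpandList (M : MTT Q S D) :
      List (RTree (Option S)) → List (MRhs Q D) → List (RTree (PL Q D)) → Prop
    | nil {ss} : MExpandList M ss [] []
    | cons {ss t ts u us} : MExpand M ss t u → MExpandList M ss ts us →
        MExpandList M ss (t :: ts) (u :: us)
end

/-- The translation `τ_M ⊆ T_Σ × T_Δ` realized by a macro tree transducer `M`
(the graph of the partial function `τ_M : T_Σ ⇀ T_Δ`). -/
def MTT.tau (M : MTT Q S D) : Set (RTree S × RTree D) :=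
  {p | RTree.WF M.rkS p.1 ∧ MEval M M.init (RTree.map some p.1) (RTree.map PL.out p.2)}

mutual
  /-- The height of a right-hand side, viewed as a tree over `Δ ∪ Q ∪ X ∪ Y`
  (a state call `q(x_i, ps)` has the leaf `x_i` as an additional child). -/
  def rhsHeight {Q D : Type} : MRhs Q D → ℕ
    | .out _ ts => 1 + rhsHeightList ts
    | .param _ => 1
    | .call _ _ ps => 1 + max 1 (rhsHeightList ps)
  def rhsHeightList {Q D : Type} : List (MRhs Q D) → ℕ
    | [] => 0
    | t :: ts => max (rhsHeight t) (rhsHeightList ts)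
end

namespace RTree
variable {α β : Type}
theorem ind {motive : RTree α → Prop}
    (h : ∀ a ts, (∀ t ∈ ts, motive t) → motive (node a ts)) : ∀ t, motive t := by
  intro t
  induction t using RTree.rec (motive_2 := fun ts => ∀ t ∈ ts, motive t) with
  | node a ts ih => exact h a ts ih
  | nil => next t ht => simp at ht
  | cons hd tl ih1 ih2 =>
    next t ht =>
    rcases List.mem_cons.mp ht with h1 | h2
    · exact h1 ▸ ih1
    · exact ih2 _ h2

theorem height_pos (t : RTree α) : 1 ≤ height t := by cases t; simp [height]
theorem size_pos (t : RTree α) : 1 ≤ size t := by cases t; simp [size]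

theorem mem_le_heightList {ts : List (RTree α)} {t} (h : t ∈ ts) : height t ≤ heightList ts := by
  induction ts with
  | nil => simp at h
  | cons hd tl ih =>
    rcases List.mem_cons.mp h with h | h
    · subst h; simp [heightList]
    · simp only [heightList]; exact le_max_of_le_right (ih h)

theorem heightList_le {ts : List (RTree α)} {n} (h : ∀ t ∈ ts, height t ≤ n) :
    heightList ts ≤ n := by
  induction ts with
  | nil => simp [heightList]
  | cons hd tl ih => simp only [heightList]; exact max_le (h _ (by simp)) (ih fun t ht => h t (by simp [ht]))

theorem mem_le_sizeList {ts : List (RTree α)} {t} (h : t ∈ ts) : size t ≤ sizeList ts := by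
  induction ts with
  | nil => simp at h
  | cons hd tl ih =>
    rcases List.mem_cons.mp h with h | h
    · subst h; simp [sizeList]
    · simp only [sizeList]; exact (ih h).trans (Nat.le_add_left _ _)

theorem mapList_eq (f : α → β) (ts : List (RTree α)) : mapList f ts = ts.map (map f) := by
  induction ts with
  | nil => rfl
  | cons hd tl ih => simp [mapList, ih]

theorem mapList_getElem? (f : α → β) (ts : List (RTree α)) (i : ℕ) :
    (mapList f ts)[i]? = ts[i]?.map (map f) := by
  simp [mapList_eq]

theorem mapList_set (f : α → β) (ts : List (RTree α)) (i : ℕ) (t : RTree α) :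
    mapList f (ts.set i t) = (mapList f ts).set i (map f t) := by
  simp [mapList_eq, List.map_set]

theorem height_map (f : α → β) : ∀ t : RTree α, height (map f t) = height t := by
  intro t
  induction t using RTree.rec (motive_2 := fun ts => heightList (mapList f ts) = heightList ts) with
  | node a ts ih => simp [map, height, ih]
  | nil => rfl
  | cons hd tl ih1 ih2 => simp [mapList, heightList, ih1, ih2]

theorem list_set_self {l : List α} {i : ℕ} {a : α} (h : l[i]? = some a) : l.set i a = l := by
  induction l generalizing i with
  | nil => simp at h
  | cons hd tl ih => cases i with
    | zero => simp_all
    | succ n => simp_all [List.set]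

theorem subtreeAt_of_replaceAt {t : RTree α} {u r t'} (h : ReplaceAt t u r t') :
    ∃ tv, SubtreeAt t u tv := by
  induction h with
  | here t r => exact ⟨t, .here t⟩
  | child hi _ ih => exact ⟨ih.choose, .child hi ih.choose_spec⟩

theorem replaceAt_of_subtreeAt {t : RTree α} {u tv} (h : SubtreeAt t u tv) (r : RTree α) :
    ∃ t', ReplaceAt t u r t' := by
  induction h with
  | here t => exact ⟨r, .here t r⟩
  | child hi _ ih => exact ⟨_, .child hi ih.choose_spec⟩

theorem replaceAt_self {t : RTree α} {u tv} (h : SubtreeAt t u tv) : ReplaceAt t u tv t := by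
  induction h with
  | here t => exact .here t t
  | child hi hs ih =>
    rename_i a0 ts0 i0 u0 ti0 r0
    have h2 : ReplaceAt (node a0 ts0) (i0 :: u0) r0 (node a0 (ts0.set i0 ti0)) :=
      .child hi ih
    rwa [list_set_self hi] at h2

theorem replaceAt_compose {t : RTree α} {u a p b t'} (h1 : ReplaceAt t u a p) :
    ReplaceAt t u b t' → ReplaceAt p u b t' := by
  induction h1 generalizing t' with
  | here => intro h2; cases h2; exact .here _ _
  | child hi h ih =>
    rename_i lab ts0 i0 u0 r0 ti0 tiP
    intro h2
    cases h2 with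
    | child hi' h' =>
      rename_i ti2 ti2'
      rw [hi] at hi'
      injection hi' with hi'
      subst hi'
      have hlen : i0 < ts0.length := (List.getElem?_eq_some_iff.mp hi).1
      have h3 : ReplaceAt (node lab (ts0.set i0 tiP)) (i0 :: u0) b
          (node lab ((ts0.set i0 tiP).set i0 ti2')) :=
        .child (List.getElem?_set_self hlen) (ih h')
      rwa [List.set_set] at h3

theorem subtreeAt_trans {t : RTree α} {u v a b} (h1 : SubtreeAt t u a) (h2 : SubtreeAt a v b) :
    SubtreeAt t (u ++ v) b := by
  induction h1 with
  | here => exact h2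
  | child hi _ ih => exact .child hi (ih h2)

theorem WF.subtreeAt {rk : α → ℕ} {t u tv} (h : SubtreeAt t u tv) : WF rk t → WF rk tv := by
  induction h with
  | here => exact id
  | child hi _ ih =>
    intro hw
    cases hw with
    | node hl hts => exact ih (hts _ (List.mem_of_getElem? hi))

theorem WF.replaceAt {rk : α → ℕ} {t : RTree α} {u r t'} (h : ReplaceAt t u r t') :
    WF rk t → WF rk r → WF rk t' := by
  induction h with
  | here => exact fun _ h => h
  | child hi _ ih =>
    intro hw hr
    cases hw with
    | node hl hts =>
      refine WF.node (by simp [hl]) ?_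
      intro t ht
      rcases List.mem_or_eq_of_mem_set ht with h1 | h1
      · exact hts _ h1
      · exact h1 ▸ ih (hts _ (List.mem_of_getElem? hi)) hr

theorem sizeList_set {ts : List (RTree α)} {i : ℕ} {ti} (h : ts[i]? = some ti) (x : RTree α) :
    sizeList (ts.set i x) + size ti = sizeList ts + size x := by
  induction ts generalizing i with
  | nil => simp at h
  | cons hd tl ih => cases i with
    | zero => simp at h; subst h; simp [sizeList]; ring
    | succ n => simp at h; simp only [List.set, sizeList]; have := ih h; omega

theorem size_replaceAt {t : RTree α} {u r t'} (h : ReplaceAt t u r t') :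
    ∀ tv, SubtreeAt t u tv → size t' + size tv = size t + size r := by
  induction h with
  | here => intro tv hv; cases hv; ring
  | child hi hrep ih =>
    rename_i lab ts0 i0 u0 r0 ti0 tiP
    intro tv hv
    cases hv with
    | child hi' hs =>
      rw [hi] at hi'; injection hi' with hi'; subst hi'
      have h1 := ih _ hs
      have h2 := sizeList_set hi tiP
      simp only [size] at *
      omega

theorem size_subtreeAt {t : RTree α} {u tv} (h : SubtreeAt t u tv) :
    size tv + u.length ≤ size t := by
  induction h with
  | here => simp
  | child hi _ ih =>
    have := mem_le_sizeList (List.mem_of_getElem? hi)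
    simp only [size, List.length_cons]
    omega

theorem f_replaceAt {β : Type} {f : RTree α → β}
    (Hf : ∀ a ts i ti t', ts[i]? = some ti → f t' = f ti →
      f (node a (ts.set i t')) = f (node a ts))
    {t : RTree α} {u r t'} (h : ReplaceAt t u r t') :
    ∀ tv, SubtreeAt t u tv → f r = f tv → f t' = f t := by
  induction h with
  | here => intro tv hv hf; cases hv; exact hf
  | child hi hrep ih =>
    intro tv hv hf
    cases hv with
    | child hi' hs =>
      rw [hi] at hi'; injection hi' with hi'; subst hi'
      exact Hf _ _ _ _ _ hi (ih _ hs hf)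

/-- A child relation. -/
def IsChild (c p : RTree α) : Prop := ∃ a ts, p = node a ts ∧ c ∈ ts

theorem heightList_attained {ts : List (RTree α)} (h : ts ≠ []) :
    ∃ t ∈ ts, heightList ts ≤ height t := by
  induction ts with
  | nil => simp at h
  | cons hd tl ih =>
    rcases eq_or_ne tl [] with h1 | h1
    · subst h1; exact ⟨hd, by simp, by simp [heightList]⟩
    · rcases ih h1 with ⟨t, ht, hle⟩
      rcases le_total (height hd) (heightList tl) with h2 | h2
      · exact ⟨t, by simp [ht], by simp only [heightList]; omega⟩
      · exact ⟨hd, by simp, by simp only [heightList]; omega⟩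

theorem exists_chain (t : RTree α) :
    ∃ l : List (RTree α), l.Chain' (fun p c => IsChild c p) ∧ l.head? = some t ∧
      l.length = height t := by
  induction t using RTree.ind with
  | h a ts ih =>
    rcases eq_or_ne ts [] with h1 | h1
    · subst h1
      exact ⟨[node a []], List.isChain_singleton _, by simp, by simp [height, heightList]⟩
    · rcases heightList_attained h1 with ⟨tm, htm, hle⟩
      rcases ih tm htm with ⟨l, hchain, hhead, hlen⟩
      refine ⟨node a ts :: l, ?_, by simp, ?_⟩
      · rw [List.Chain', List.isChain_cons]
        exact ⟨fun b hb => by rw [hhead] at hb; cases hb; exact ⟨a, ts, rfl, htm⟩, hchain⟩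
      · have h2 : height tm ≤ heightList ts := mem_le_heightList htm
        simp only [List.length_cons, hlen, height]
        omega

theorem isChild_subtree {c p : RTree α} (h : IsChild c p) :
    (∃ i, SubtreeAt p [i] c) ∧ size c < size p := by
  obtain ⟨a, ts, rfl, hmem⟩ := h
  obtain ⟨i, hi⟩ := List.getElem?_of_mem hmem
  refine ⟨⟨i, .child hi (.here c)⟩, ?_⟩
  have := mem_le_sizeList hmem
  simp only [size]; omega

theorem chain_subtree {l : List (RTree α)} (hc : l.Chain' (fun p c => IsChild c p)) :
    ∀ j (hj : j < l.length) i (hij : i ≤ j),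
      ∃ u, SubtreeAt (l.get ⟨i, lt_of_le_of_lt hij hj⟩) u (l.get ⟨j, hj⟩) ∧
        size (l.get ⟨j, hj⟩) + (j - i) ≤ size (l.get ⟨i, lt_of_le_of_lt hij hj⟩) := by
  intro j
  induction j with
  | zero =>
    intro hj i hij
    interval_cases i
    exact ⟨[], .here _, by omega⟩
  | succ j ihj =>
    intro hj i hij
    rcases eq_or_lt_of_le hij with rfl | hlt
    · exact ⟨[], .here _, by omega⟩
    · have hij' : i ≤ j := by omega
      have hj' : j < l.length := by omega
      obtain ⟨u, hsub, hsz⟩ := ihj hj' i hij'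
      have hrel : IsChild (l.get ⟨j + 1, hj⟩) (l.get ⟨j, hj'⟩) :=
        List.isChain_iff_getElem.mp hc j (by omega)
      obtain ⟨⟨k, hk⟩, hslt⟩ := isChild_subtree hrel
      exact ⟨u ++ [k], subtreeAt_trans hsub hk, by omega⟩

theorem exists_small_rep {β : Type} [Fintype β] (f : RTree α → β) (rk : α → ℕ)
    (Hf : ∀ a ts i ti t', ts[i]? = some ti → f t' = f ti →
      f (node a (ts.set i t')) = f (node a ts)) :
    ∀ n (t : RTree α), size t ≤ n → WF rk t →
      ∃ t', WF rk t' ∧ f t' = f t ∧ height t' ≤ Fintype.card β := by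
  intro n
  induction n with
  | zero => intro t h _; have := size_pos t; omega
  | succ n ih =>
    intro t hsz hwf
    by_cases hh : height t ≤ Fintype.card β
    · exact ⟨t, hwf, rfl, hh⟩
    · push_neg at hh
      obtain ⟨l, hchain, hhead, hlen⟩ := exists_chain t
      have hlt : Fintype.card β < l.length := by omega
      have key : ∀ x y : Fin l.length, x.val < y.val → f (l.get x) = f (l.get y) →
          ∃ t', WF rk t' ∧ f t' = f t ∧ height t' ≤ Fintype.card β := by
        intro x y hxy hfeq
        have h0 : 0 < l.length := by omega
        have hget0 : l.get ⟨0, h0⟩ = t := by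
          have : l[0]? = some t := by rwa [← List.head?_eq_getElem?]
          rw [List.getElem?_eq_some_iff] at this
          exact this.2
        obtain ⟨ux, h0x, _⟩ := chain_subtree hchain x.val x.isLt 0 (Nat.zero_le _)
        obtain ⟨w, hsub, hszlt⟩ := chain_subtree hchain y.val y.isLt x.val (le_of_lt hxy)
        rw [hget0] at h0x
        simp only [Fin.eta] at h0x hsub hszlt
        obtain ⟨t', hrep⟩ := replaceAt_of_subtreeAt h0x (l.get y)
        have hft' : f t' = f t := f_replaceAt Hf hrep _ h0x hfeq.symm
        have hwfy : WF rk (l.get y) := WF.subtreeAt (subtreeAt_trans h0x hsub) hwf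
        have hwft' : WF rk t' := WF.replaceAt hrep hwf hwfy
        have hsz' : size t' + size (l.get x) = size t + size (l.get y) :=
          size_replaceAt hrep _ h0x
        have hslt : size (l.get y) < size (l.get x) := by omega
        obtain ⟨t'', hwf'', hf'', hh''⟩ := ih t' (by omega) hwft'
        exact ⟨t'', hwf'', hf''.trans hft', hh''⟩
      obtain ⟨x, y, hxy, hfeq⟩ := Fintype.exists_ne_map_eq_of_card_lt
        (fun k : Fin l.length => f (l.get k)) (by simpa using hlt)
      rcases lt_or_gt_of_ne (fun hc => hxy (by exact hc)) with hlt' | hlt'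
      · exact key x y hlt' hfeq
      · exact key y x hlt' hfeq.symm

theorem exists_small {β : Type} [Fintype β] (f : RTree α → β) (rk : α → ℕ)
    (Hf : ∀ a ts i ti t', ts[i]? = some ti → f t' = f ti →
      f (node a (ts.set i t')) = f (node a ts))
    (t : RTree α) (hwf : WF rk t) :
    ∃ t', WF rk t' ∧ f t' = f t ∧ height t' ≤ Fintype.card β :=
  exists_small_rep f rk Hf (size t) t le_rfl hwf

end RTree

section Aux1
variable {Q S D : Type}

mutual
  /-- no `none` labels. -/
  def NoneFree : RTree (Option S) → Prop
    | .node none _ => False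
    | .node (some _) ts => NoneFreeList ts
  def NoneFreeList : List (RTree (Option S)) → Prop
    | [] => True
    | t :: ts => NoneFree t ∧ NoneFreeList ts
end

mutual
  /-- top-down form: no parameters, state calls have no children. -/
  def Good : RTree (PL Q D) → Prop
    | .node (.out _) ts => GoodList ts
    | .node (.st _) ts => ts = []
    | .node (.pr _) _ => False
  def GoodList : List (RTree (PL Q D)) → Prop
    | [] => True
    | t :: ts => Good t ∧ GoodList ts
end

mutual
  def StFree : RTree (PL Q D) → Prop
    | .node (.st _) _ => False
    | .node (.out _) ts => StFreeList ts
    | .node (.pr _) ts => StFreeList ts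
  def StFreeList : List (RTree (PL Q D)) → Prop
    | [] => True
    | t :: ts => StFree t ∧ StFreeList ts
end

mutual
  def HasSt (q : Q) : RTree (PL Q D) → Prop
    | .node (.st q') ts => q = q' ∨ HasStList q ts
    | .node (.out _) ts => HasStList q ts
    | .node (.pr _) ts => HasStList q ts
  def HasStList (q : Q) : List (RTree (PL Q D)) → Prop
    | [] => False
    | t :: ts => HasSt q t ∨ HasStList q ts
end

mutual
  /-- substitute state-call leaves. -/
  def stsubst (g : Q → RTree (PL Q D)) : RTree (PL Q D) → RTree (PL Q D)
    | .node (.st q) _ => g q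
    | .node (.out d) ts => .node (.out d) (stsubstList g ts)
    | .node (.pr j) ts => .node (.pr j) (stsubstList g ts)
  def stsubstList (g : Q → RTree (PL Q D)) :
      List (RTree (PL Q D)) → List (RTree (PL Q D))
    | [] => []
    | t :: ts => stsubst g t :: stsubstList g ts
end

theorem noneFreeList_iff {ts : List (RTree (Option S))} :
    NoneFreeList ts ↔ ∀ t ∈ ts, NoneFree t := by
  induction ts with
  | nil => simp [NoneFreeList]
  | cons hd tl ih => simp [NoneFreeList, ih]

theorem goodList_iff {ts : List (RTree (PL Q D))} :
    GoodList ts ↔ ∀ t ∈ ts, Good t := by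
  induction ts with
  | nil => simp [GoodList]
  | cons hd tl ih => simp [GoodList, ih]

theorem stFreeList_iff {ts : List (RTree (PL Q D))} :
    StFreeList ts ↔ ∀ t ∈ ts, StFree t := by
  induction ts with
  | nil => simp [StFreeList]
  | cons hd tl ih => simp [StFreeList, ih]

theorem hasStList_iff {q : Q} {ts : List (RTree (PL Q D))} :
    HasStList q ts ↔ ∃ t ∈ ts, HasSt q t := by
  induction ts with
  | nil => simp [HasStList]
  | cons hd tl ih => simp [HasStList, ih]

theorem noneFree_map_some (s : RTree S) : NoneFree (RTree.map some s) := by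
  induction s using RTree.ind with
  | h a ts ih =>
    simp only [RTree.map, NoneFree, RTree.mapList_eq, noneFreeList_iff]
    intro t ht
    simp only [List.mem_map] at ht
    obtain ⟨t', ht', rfl⟩ := ht
    exact ih t' ht'

theorem stsubstList_eq (g : Q → RTree (PL Q D)) (ts : List (RTree (PL Q D))) :
    stsubstList g ts = ts.map (stsubst g) := by
  induction ts with
  | nil => rfl
  | cons hd tl ih => simp [stsubstList, ih]

theorem psubstList_eq (vs : List (RTree (PL Q D))) (ts : List (RTree (PL Q D))) :
    psubstList vs ts = ts.map (psubst vs) := by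
  induction ts with
  | nil => rfl
  | cons hd tl ih => simp [psubstList, ih]

theorem stsubst_id {g : Q → RTree (PL Q D)} {t : RTree (PL Q D)} (h : StFree t) :
    stsubst g t = t := by
  induction t using RTree.ind with
  | h a ts ih =>
    cases a with
    | st q => simp [StFree] at h
    | out d =>
      simp only [StFree, stFreeList_iff] at h
      simp only [stsubst, stsubstList_eq]
      congr 1
      conv_rhs => rw [show ts = ts.map id from (List.map_id ts).symm]
      exact List.map_congr_left fun t ht => ih t ht (h t ht)
    | pr j =>
      simp only [StFree, stFreeList_iff] at h
      simp only [stsubst, stsubstList_eq]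
      congr 1
      conv_rhs => rw [show ts = ts.map id from (List.map_id ts).symm]
      exact List.map_congr_left fun t ht => ih t ht (h t ht)
end Aux1

section Aux2
variable {Q S D : Type}

theorem psubst_id {vs : List (RTree (PL Q D))} {t : RTree (PL Q D)} (h : Good t) :
    psubst vs t = t := by
  induction t using RTree.ind with
  | h a ts ih =>
    cases a with
    | st q => simp only [Good] at h; subst h; simp [psubst, psubstList]
    | out d =>
      simp only [Good, goodList_iff] at h
      simp only [psubst, psubstList_eq]
      congr 1
      conv_rhs => rw [show ts = ts.map id from (List.map_id ts).symm]
      exact List.map_congr_left fun t ht => ih t ht (h t ht)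
    | pr j => simp [Good] at h

theorem good_stsubst {g : Q → RTree (PL Q D)} {t : RTree (PL Q D)} (h : Good t)
    (hg : ∀ q, HasSt q t → Good (g q)) : Good (stsubst g t) := by
  induction t using RTree.ind with
  | h a ts ih =>
    cases a with
    | st q => exact hg q (by simp [HasSt])
    | out d =>
      simp only [Good, goodList_iff] at h ⊢
      simp only [stsubst, stsubstList_eq]
      simp only [Good, goodList_iff, List.mem_map]
      rintro _ ⟨t, ht, rfl⟩
      exact ih t ht (h t ht) fun q hq => hg q (by
        simp only [HasSt, hasStList_iff]; exact ⟨t, ht, hq⟩)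
    | pr j => simp [Good] at h

theorem stFree_stsubst {g : Q → RTree (PL Q D)} {t : RTree (PL Q D)}
    (hg : ∀ q, HasSt q t → StFree (g q)) : StFree (stsubst g t) := by
  induction t using RTree.ind with
  | h a ts ih =>
    cases a with
    | st q => exact hg q (by simp [HasSt])
    | out d =>
      simp only [stsubst, StFree, stFreeList_iff, stsubstList_eq, List.mem_map]
      rintro _ ⟨t, ht, rfl⟩
      exact ih t ht fun q hq => hg q (by
        simp only [HasSt, hasStList_iff]; exact ⟨t, ht, hq⟩)
    | pr j =>
      simp only [stsubst, StFree, stFreeList_iff, stsubstList_eq, List.mem_map]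
      rintro _ ⟨t, ht, rfl⟩
      exact ih t ht fun q hq => hg q (by
        simp only [HasSt, hasStList_iff]; exact ⟨t, ht, hq⟩)

theorem height_le_stsubst {g : Q → RTree (PL Q D)} {t : RTree (PL Q D)} (h : Good t) :
    RTree.height t ≤ RTree.height (stsubst g t) := by
  induction t using RTree.ind with
  | h a ts ih =>
    cases a with
    | st q =>
      simp only [Good] at h; subst h
      simp only [RTree.height, RTree.heightList]
      exact RTree.height_pos _
    | out d =>
      simp only [Good, goodList_iff] at h
      simp only [stsubst, RTree.height, stsubstList_eq]
      have : RTree.heightList ts ≤ RTree.heightList (List.map (stsubst g) ts) := by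
        apply RTree.heightList_le
        intro t ht
        exact (ih t ht (h t ht)).trans
          (RTree.mem_le_heightList (List.mem_map_of_mem ht))
      omega
    | pr j => simp [Good] at h

theorem stsubst_height_le {g : Q → RTree (PL Q D)} {B : ℕ} (hB : 1 ≤ B)
    {t : RTree (PL Q D)} (h : Good t)
    (hg : ∀ q, HasSt q t → RTree.height (g q) ≤ B) :
    RTree.height (stsubst g t) + 1 ≤ RTree.height t + B := by
  induction t using RTree.ind with
  | h a ts ih =>
    cases a with
    | st q =>
      have := hg q (by simp [HasSt])
      simp only [stsubst, RTree.height, RTree.heightList]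
      omega
    | out d =>
      simp only [Good, goodList_iff] at h
      simp only [stsubst, RTree.height, stsubstList_eq]
      have key : ∀ tl : List (RTree (PL Q D)), (∀ t ∈ tl, Good t) →
          (∀ t ∈ tl, ∀ q, HasSt q t → RTree.height (g q) ≤ B) →
          (∀ t ∈ tl, Good t → (∀ q, HasSt q t → RTree.height (g q) ≤ B) →
            RTree.height (stsubst g t) + 1 ≤ RTree.height t + B) →
          RTree.heightList (List.map (stsubst g) tl) + 1 ≤ RTree.heightList tl + B := by
        intro tl
        induction tl with
        | nil => simp [RTree.heightList]; omega
        | cons hd tl2 ihts =>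
          intro hgood hhg hih
          simp only [List.map_cons, RTree.heightList]
          have h1 := hih hd (by simp) (hgood hd (by simp)) (hhg hd (by simp))
          have h2 := ihts (fun t ht => hgood t (by simp [ht]))
            (fun t ht => hhg t (by simp [ht])) (fun t ht => hih t (by simp [ht]))
          omega
      have := key ts h
        (fun t ht q hq => hg q (by simp only [HasSt, hasStList_iff]; exact ⟨t, ht, hq⟩))
        (fun t ht => ih t ht)
      omega
    | pr j => simp [Good] at h

theorem eq_map_out {t : RTree (PL Q D)} (h : Good t) (h2 : StFree t) :
    ∃ t', t = RTree.map PL.out t' := by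
  induction t using RTree.ind with
  | h a ts ih =>
    cases a with
    | st q => simp [StFree] at h2
    | pr j => simp [Good] at h
    | out d =>
      simp only [Good, goodList_iff] at h
      simp only [StFree, stFreeList_iff] at h2
      have : ∀ t ∈ ts, ∃ t', t = RTree.map PL.out t' := fun t ht => ih t ht (h t ht) (h2 t ht)
      choose f hf using this
      refine ⟨RTree.node d (ts.attach.map fun t => f t.1 t.2), ?_⟩
      simp only [RTree.map, RTree.mapList_eq, List.map_map]
      congr 1
      conv_lhs => rw [← List.attach_map_subtype_val ts]
      exact List.map_congr_left fun t _ => hf t.1 t.2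
end Aux2

section Det
variable {Q S D : Type}

theorem meval_det {M : MTT Q S D} {q s t} (h : MEval M q s t) :
    ∀ t', MEval M q s t' → t = t' := by
  induction h using MEval.rec
    (motive_2 := fun ss r t _ => ∀ t', MExpand M ss r t' → t = t')
    (motive_3 := fun ss rs ts _ => ∀ ts', MExpandList M ss rs ts' → ts = ts') with
  | atX q => intro t' h'; cases h'; rfl
  | step hr hexp ih =>
    intro t' h'
    cases h' with
    | step hr' hexp' =>
      rw [hr] at hr'; injection hr' with hr'; subst hr'
      exact ih _ hexp'
  | out hlist ih =>
    rename_i t' h'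
    cases h' with
    | out hlist' => rw [ih _ hlist']
  | param => rename_i t' h'; cases h'; rfl
  | call hi hlist hev ihl ihe =>
    rename_i t' h'
    cases h' with
    | call hi' hlist' hev' =>
      rw [hi] at hi'; injection hi' with hi'; subst hi'
      rw [ihl _ hlist', ihe _ hev']
  | nil => rename_i ts2 h2; cases h2; rfl
  | cons hexp hlist ih2 ih3 =>
    rename_i ts' h'
    cases h' with
    | cons hexp' hlist' => rw [ih2 _ hexp', ih3 _ hlist']
end Det

section Ev1
variable {Q S D : Type}

theorem meval_good {M : MTT Q S D} (hp : M.Proper) (htd : IsTopDown M) {q s t}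
    (h : MEval M q s t) : Good t := by
  induction h using MEval.rec
    (motive_2 := fun ss r t _ => ∀ k, RhsWF M.rkD M.prm k 0 r → Good t)
    (motive_3 := fun ss rs ts _ => ∀ k, (∀ r ∈ rs, RhsWF M.rkD M.prm k 0 r) → GoodList ts) with
  | atX q => rw [htd q]; simp [Good]
  | step hr hexp ih =>
    rename_i q σ ss r t
    have := hp.2 q σ r hr
    rw [htd q] at this
    exact ih _ this
  | out hlist ih =>
    rename_i k hwf
    cases hwf with
    | out hlen hts => exact ih k hts
  | param =>
    rename_i k hwf
    cases hwf with
    | param hj => omega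
  | call hi hlist hev ihl ihe =>
    rename_i ss q i ps si vs u k hwf
    cases hwf with
    | call hik hlen hps =>
      rw [htd q] at hlen
      have hps0 : ps = [] := List.length_eq_zero_iff.mp hlen
      subst hps0
      cases hlist
      rw [psubst_id ihe]
      exact ihe
  | nil => rename_i k hwf; trivial
  | cons hexp hlist ih2 ih3 =>
    rename_i k hwf
    exact ⟨ih2 k (hwf _ (by simp)), ih3 k fun r hr => hwf r (by simp [hr])⟩

theorem stFree_not_hasSt {t : RTree (PL Q D)} (h : StFree t) {q : Q} : ¬ HasSt q t := by
  induction t using RTree.ind with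
  | h a ts ih =>
    cases a with
    | st q' => simp [StFree] at h
    | out d =>
      simp only [StFree, stFreeList_iff] at h
      simp only [HasSt, hasStList_iff]
      rintro ⟨t, ht, hq⟩
      exact ih t ht (h t ht) hq
    | pr j =>
      simp only [StFree, stFreeList_iff] at h
      simp only [HasSt, hasStList_iff]
      rintro ⟨t, ht, hq⟩
      exact ih t ht (h t ht) hq

theorem meval_stFree {M : MTT Q S D} (hp : M.Proper) (htd : IsTopDown M) {q s t}
    (h : MEval M q s t) : NoneFree s → StFree t := by
  induction h using MEval.rec
    (motive_2 := fun ss r t _ =>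
      ∀ k, RhsWF M.rkD M.prm k 0 r → NoneFreeList ss → StFree t)
    (motive_3 := fun ss rs ts _ =>
      ∀ k, (∀ r ∈ rs, RhsWF M.rkD M.prm k 0 r) → NoneFreeList ss → StFreeList ts) with
  | atX q => intro hn; simp [NoneFree] at hn
  | step hr hexp ih =>
    rename_i q σ ss r t
    intro hn
    have := hp.2 q σ r hr
    rw [htd q] at this
    exact ih _ this hn
  | out hlist ih =>
    rename_i k hwf hn
    cases hwf with
    | out hlen hts => exact ih k hts hn
  | param =>
    rename_i k hwf hn
    cases hwf with
    | param hj => omega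
  | call hi hlist hev ihl ihe =>
    rename_i ss q i ps si vs u k hwf hn
    cases hwf with
    | call hik hlen hps =>
      rw [htd q] at hlen
      have hps0 : ps = [] := List.length_eq_zero_iff.mp hlen
      subst hps0
      cases hlist
      rw [psubst_id (meval_good hp htd hev)]
      exact ihe (noneFreeList_iff.mp hn _ (List.mem_of_getElem? hi))
  | nil => rename_i k hwf hn; trivial
  | cons hexp hlist ih2 ih3 =>
    rename_i k hwf hn
    exact ⟨ih2 k (hwf _ (by simp)) hn, ih3 k (fun r hr => hwf r (by simp [hr])) hn⟩

theorem meval_height {M : MTT Q S D} (hp : M.Proper) (htd : IsTopDown M) {h : ℕ}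
    (hh : 1 ≤ h) (hmax : ∀ q σ r, M.rules q σ = some r → rhsHeight r ≤ h) {q s t}
    (he : MEval M q s t) : RTree.height t ≤ h * RTree.height s := by
  induction he using MEval.rec
    (motive_2 := fun ss r t _ => ∀ k, RhsWF M.rkD M.prm k 0 r →
      RTree.height t ≤ rhsHeight r + h * RTree.heightList ss)
    (motive_3 := fun ss rs ts _ => ∀ k, (∀ r ∈ rs, RhsWF M.rkD M.prm k 0 r) →
      RTree.heightList ts ≤ rhsHeightList rs + h * RTree.heightList ss) with
  | atX q =>
    rw [htd q]
    simp only [List.range_zero, List.map_nil]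
    have h1 := RTree.height_pos (RTree.node (none : Option S) [])
    have h2 : 1 ≤ h * RTree.height (RTree.node (none : Option S) []) :=
      Nat.one_le_iff_ne_zero.mpr (by positivity)
    simp only [RTree.height, RTree.heightList]
    omega
  | step hr hexp ih =>
    rename_i q σ ss r t
    have hwf := hp.2 q σ r hr
    rw [htd q] at hwf
    have h1 := ih _ hwf
    have h2 := hmax q σ r hr
    simp only [RTree.height]
    have : h * (1 + RTree.heightList ss) = h + h * RTree.heightList ss := by ring
    rw [this]
    omega
  | out hlist ih =>
    rename_i k hwf
    cases hwf with
    | out hlen hts =>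
      have := ih k hts
      simp only [RTree.height, rhsHeight]
      omega
  | param =>
    rename_i k hwf
    simp only [RTree.height, RTree.heightList, rhsHeight]
    omega
  | call hi hlist hev ihl ihe =>
    rename_i ss q i ps si vs u k hwf
    cases hwf with
    | call hik hlen hps =>
      rw [htd q] at hlen
      have hps0 : ps = [] := List.length_eq_zero_iff.mp hlen
      subst hps0
      cases hlist
      rw [psubst_id (meval_good hp htd hev)]
      have h1 : RTree.height si ≤ RTree.heightList ss :=
        RTree.mem_le_heightList (List.mem_of_getElem? hi)
      have h2 : h * RTree.height si ≤ h * RTree.heightList ss :=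
        Nat.mul_le_mul_left h h1
      have := ihe
      simp only [rhsHeight]
      omega
  | nil =>
    rename_i k hwf
    simp only [RTree.heightList, rhsHeightList]
    omega
  | cons hexp hlist ih2 ih3 =>
    rename_i k hwf
    have h1 := ih2 k (hwf _ (by simp))
    have h2 := ih3 k fun r hr => hwf r (by simp [hr])
    simp only [RTree.heightList, rhsHeightList]
    omega
end Ev1

section Ev2
variable {Q S D : Type}

/-- definedness-equivalence of two inputs. -/
def EvalDefIff (M : MTT Q S D) (a b : RTree (Option S)) : Prop :=
  ∀ q, (∃ t, MEval M q a t) ↔ ∃ t, MEval M q b t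

theorem mexpand_transfer {M : MTT Q S D} {ss : List (RTree (Option S))} {r t}
    (h : MExpand M ss r t) :
    ∀ ss' : List (RTree (Option S)),
      (∀ (j : ℕ) (a : RTree (Option S)), ss[j]? = some a →
        ∃ b, ss'[j]? = some b ∧ EvalDefIff M a b) →
      ∃ t', MExpand M ss' r t' := by
  induction h using MExpand.rec
    (motive_1 := fun _ _ _ _ => True)
    (motive_3 := fun ss rs ts _ =>
      ∀ ss' : List (RTree (Option S)),
        (∀ (j : ℕ) (a : RTree (Option S)), ss[j]? = some a →
          ∃ b, ss'[j]? = some b ∧ EvalDefIff M a b) →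
        ∃ ts', MExpandList M ss' rs ts') with
  | atX q => trivial
  | step hr hexp ih => trivial
  | out hlist ih =>
    intro ss' hyp
    obtain ⟨us', hus'⟩ := ih ss' hyp
    exact ⟨_, .out hus'⟩
  | param => intro ss' hyp; exact ⟨_, .param⟩
  | call hi hlist hev ihl ihe =>
    intro ss' hyp
    obtain ⟨b, hb, hiff⟩ := hyp _ _ hi
    obtain ⟨u', hu'⟩ := (hiff _).mp ⟨_, hev⟩
    obtain ⟨vs', hvs'⟩ := ihl ss' hyp
    exact ⟨_, .call hb hvs' hu'⟩
  | nil => rename_i ss' hyp; exact ⟨[], .nil⟩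
  | cons hexp hlist ih2 ih3 =>
    rename_i ss' hyp
    obtain ⟨u', hu'⟩ := ih2 ss' hyp
    obtain ⟨us', hus'⟩ := ih3 ss' hyp
    exact ⟨_, .cons hu' hus'⟩

/-- `a` is a partial input `t0[u ← x]` and `b = t0[u ← r]` (or both equal and complete). -/
def RRel (r a b : RTree (Option S)) : Prop :=
  (NoneFree a ∧ a = b) ∨
    ∃ t0 u, NoneFree t0 ∧ RTree.ReplaceAt t0 u xLeaf a ∧ RTree.ReplaceAt t0 u r b

def LRel (r : RTree (Option S)) (ss ss' : List (RTree (Option S))) : Prop :=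
  ∀ (j : ℕ) (a : RTree (Option S)), ss[j]? = some a → ∃ b, ss'[j]? = some b ∧ RRel r a b

theorem replaceAt_xleaf_inv {t0 a : RTree (Option S)} {u : List ℕ}
    (h : RTree.ReplaceAt t0 u xLeaf a) : a = xLeaf → NoneFree t0 → u = [] := by
  cases h with
  | here => intros; rfl
  | child hi hrep =>
    intro he hnf
    injection he with h1 h2
    subst h1
    simp [NoneFree] at hnf

theorem rrel_xLeaf {r b : RTree (Option S)} (h : RRel r xLeaf b) : b = r := by
  rcases h with ⟨hnf, rfl⟩ | ⟨t0, u, hnf, h1, h2⟩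
  · simp [NoneFree, xLeaf] at hnf
  · have hu : u = [] := replaceAt_xleaf_inv h1 rfl hnf
    subst hu
    cases h1
    cases h2
    rfl

theorem rrel_node {r : RTree (Option S)} {σ : S} {ss : List (RTree (Option S))}
    {b : RTree (Option S)} (hR : RRel r (RTree.node (some σ) ss) b) :
    ∃ ss', b = RTree.node (some σ) ss' ∧ LRel r ss ss' := by
  rcases hR with ⟨hnf, rfl⟩ | ⟨t0, u, hnf, h1, h2⟩
  · refine ⟨ss, rfl, ?_⟩
    unfold LRel
    intro j a hj
    refine ⟨a, hj, Or.inl ⟨?_, rfl⟩⟩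
    simp only [NoneFree] at hnf
    exact noneFreeList_iff.mp hnf a (List.mem_of_getElem? hj)
  · cases h1 with
    | child hi hrep =>
      rename_i ts0 i u0 ti tia
      cases h2 with
      | child hi2 hrep2 =>
        rename_i ti2 tib
        rw [hi] at hi2; injection hi2 with hi2; subst hi2
        simp only [NoneFree] at hnf
        refine ⟨ts0.set i tib, rfl, ?_⟩
        unfold LRel
        intro j a hj
        rcases eq_or_ne i j with rfl | hne
        · have hlen : i < ts0.length := (List.getElem?_eq_some_iff.mp hi).1
          rw [List.getElem?_set_self hlen] at hj
          injection hj with hj; subst hj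
          exact ⟨tib, List.getElem?_set_self hlen, Or.inr
            ⟨ti, u0, noneFreeList_iff.mp hnf ti (List.mem_of_getElem? hi), hrep, hrep2⟩⟩
        · rw [List.getElem?_set, if_neg hne] at hj
          refine ⟨a, by rw [List.getElem?_set, if_neg hne]; exact hj, Or.inl ⟨?_, rfl⟩⟩
          exact noneFreeList_iff.mp hnf a (List.mem_of_getElem? hj)
end Ev2

section Ev3
variable {Q S D : Type}

theorem meval_compose {M : MTT Q S D} (hp : M.Proper) (htd : IsTopDown M)
    {r : RTree (Option S)} {g : Q → RTree (PL Q D)} {q : Q} {a : RTree (Option S)}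
    {ξ : RTree (PL Q D)} (h : MEval M q a ξ) :
    ∀ b, RRel r a b → (∀ q', HasSt q' ξ → MEval M q' r (g q')) →
      MEval M q b (stsubst g ξ) := by
  induction h using MEval.rec
    (motive_2 := fun ss rhs t _ => ∀ k, RhsWF M.rkD M.prm k 0 rhs →
      ∀ ss', LRel r ss ss' → (∀ q', HasSt q' t → MEval M q' r (g q')) →
        MExpand M ss' rhs (stsubst g t))
    (motive_3 := fun ss rhss ts _ => ∀ k, (∀ rr ∈ rhss, RhsWF M.rkD M.prm k 0 rr) →
      ∀ ss', LRel r ss ss' → (∀ q', HasStList q' ts → MEval M q' r (g q')) →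
        MExpandList M ss' rhss (stsubstList g ts)) with
  | atX q =>
    intro b hR hg
    have hb := rrel_xLeaf hR
    subst hb
    exact hg q (Or.inl rfl)
  | step hr hexp ih =>
    rename_i q σ ss rr t
    intro b hR hg
    obtain ⟨ss', rfl, hL⟩ := rrel_node hR
    have hwf := hp.2 q σ rr hr
    rw [htd q] at hwf
    exact .step hr (ih _ hwf ss' hL hg)
  | out hlist ih =>
    rename_i k hwf ss' hL hg
    cases hwf with
    | out hlen hts => exact .out (ih k hts ss' hL fun q' hq' => hg q' hq')
  | param =>
    rename_i k hwf ss' hL hg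
    cases hwf with
    | param hj => exact absurd hj (by omega)
  | call hi hlist hev ihl ihe =>
    rename_i ss2 qc i ps si vs u k hwf ss' hL hg
    cases hwf with
    | call hik hlen hps =>
      rw [htd] at hlen
      have hps0 : ps = [] := List.length_eq_zero_iff.mp hlen
      subst hps0
      cases hlist
      have hgood : Good u := meval_good hp htd hev
      rw [psubst_id hgood] at hg ⊢
      have hgu : ∀ q', HasSt q' u → MEval M q' r (g q') := hg
      obtain ⟨b, hb, hRb⟩ := hL _ _ hi
      have heval := ihe b hRb hgu
      have hcall : MExpand M ss' (.call qc i []) (psubst [] (stsubst g u)) :=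
        .call hb .nil heval
      rwa [psubst_id (good_stsubst hgood
        fun q' hq' => meval_good hp htd (hgu q' hq'))] at hcall
  | nil =>
    rename_i k hwf ss' hL hg
    exact .nil
  | cons hexp hlist ih2 ih3 =>
    rename_i k hwf ss' hL hg
    exact .cons (ih2 k (hwf _ (by simp)) ss' hL fun q' hq' => hg q' (Or.inl hq'))
      (ih3 k (fun rr hh => hwf rr (by simp [hh])) ss' hL fun q' hq' => hg q' (Or.inr hq'))

theorem meval_calls_defined {M : MTT Q S D} (hp : M.Proper) (htd : IsTopDown M)
    {r : RTree (Option S)} {q : Q} {a : RTree (Option S)} {ξ : RTree (PL Q D)}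
    (h : MEval M q a ξ) :
    ∀ b θ, RRel r a b → MEval M q b θ → ∀ q', HasSt q' ξ → ∃ w, MEval M q' r w := by
  induction h using MEval.rec
    (motive_2 := fun ss rhs t _ => ∀ k, RhsWF M.rkD M.prm k 0 rhs →
      ∀ ss' t', LRel r ss ss' → MExpand M ss' rhs t' →
        ∀ q', HasSt q' t → ∃ w, MEval M q' r w)
    (motive_3 := fun ss rhss ts _ => ∀ k, (∀ rr ∈ rhss, RhsWF M.rkD M.prm k 0 rr) →
      ∀ ss' ts', LRel r ss ss' → MExpandList M ss' rhss ts' →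
        ∀ q', HasStList q' ts → ∃ w, MEval M q' r w) with
  | atX q =>
    intro b θ hR hθ q' hq'
    have hb := rrel_xLeaf hR
    subst hb
    rw [htd q] at hq'
    simp only [List.range_zero, List.map_nil] at hq'
    rcases hq' with rfl | hq'
    · exact ⟨θ, hθ⟩
    · simp [HasStList] at hq'
  | step hr hexp ih =>
    rename_i q σ ss rr t
    intro b θ hR hθ q' hq'
    obtain ⟨ss', rfl, hL⟩ := rrel_node hR
    cases hθ with
    | step hr' hexp' =>
      rw [hr] at hr'; injection hr' with hr'; subst hr'
      have hwf := hp.2 q σ rr hr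
      rw [htd q] at hwf
      exact ih _ hwf ss' _ hL hexp' q' hq'
  | out hlist ih =>
    rename_i k hwf ss' t' hL hexp' q' hq'
    cases hwf with
    | out hlen hts =>
      cases hexp' with
      | out hlist' => exact ih k hts ss' _ hL hlist' q' hq'
  | param =>
    rename_i k hwf ss' t' hL hexp' q' hq'
    simp [HasSt, HasStList] at hq'
  | call hi hlist hev ihl ihe =>
    rename_i ss2 qc i ps si vs u k hwf ss' t' hL hexp' q' hq'
    cases hwf with
    | call hik hlen hps =>
      rw [htd] at hlen
      have hps0 : ps = [] := List.length_eq_zero_iff.mp hlen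
      subst hps0
      cases hlist
      rw [psubst_id (meval_good hp htd hev)] at hq'
      cases hexp' with
      | call hb' hlist' hev' =>
        obtain ⟨b, hb, hRb⟩ := hL _ _ hi
        rw [hb] at hb'
        injection hb' with hb'
        subst hb'
        exact ihe _ _ hRb hev' q' hq'
  | nil =>
    rename_i k hwf ss' ts' hL hexp' q' hq'
    simp [HasStList] at hq'
  | cons hexp hlist ih2 ih3 =>
    rename_i k hwf ss' ts' hL hexp' q' hq'
    cases hexp' with
    | cons h1 h2 =>
      simp only [HasStList] at hq'
      rcases hq' with hq' | hq'
      · exact ih2 k (hwf _ (by simp)) ss' _ hL h1 q' hq'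
      · exact ih3 k (fun rr hh => hwf rr (by simp [hh])) ss' _ hL h2 q' hq'
end Ev3

section Ev4
variable {Q S D : Type} {α β : Type}

theorem subtreeAt_map_inv {f : α → β} {p : RTree β} {u : List ℕ} {w : RTree β}
    (h : RTree.SubtreeAt p u w) :
    ∀ t : RTree α, p = RTree.map f t → ∃ tv, RTree.SubtreeAt t u tv ∧ w = RTree.map f tv := by
  induction h with
  | here p => exact fun t ht => ⟨t, .here t, ht⟩
  | child hi hs ih =>
    rename_i a ts i u ti w
    intro t ht
    cases t with
    | node a0 ts0 =>
      simp only [RTree.map] at ht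
      injection ht with h1 h2
      subst h1; subst h2
      rw [RTree.mapList_getElem?] at hi
      obtain ⟨ti0, hti0, rfl⟩ := Option.map_eq_some_iff.mp hi
      obtain ⟨tv, htv, rfl⟩ := ih ti0 rfl
      exact ⟨tv, .child hti0 htv, rfl⟩

theorem replaceAt_map {f : α → β} {t : RTree α} {u r t'}
    (h : RTree.ReplaceAt t u r t') :
    RTree.ReplaceAt (RTree.map f t) u (RTree.map f r) (RTree.map f t') := by
  induction h with
  | here t r => exact .here _ _
  | child hi hrep ih =>
    rename_i a ts i u r ti ti'
    simp only [RTree.map, RTree.mapList_set]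
    exact .child (by rw [RTree.mapList_getElem?, hi]; rfl) ih

theorem eval_node_iff {M : MTT Q S D} {q : Q} {σ : S} {ss : List (RTree (Option S))} :
    (∃ w, MEval M q (.node (some σ) ss) w) ↔
      ∃ rhs, M.rules q σ = some rhs ∧ ∃ w, MExpand M ss rhs w := by
  constructor
  · rintro ⟨w, hw⟩
    cases hw with
    | step hr he => exact ⟨_, hr, _, he⟩
  · rintro ⟨rhs, hr, w, he⟩
    exact ⟨w, .step hr he⟩

theorem defIff_node {M : MTT Q S D} {a : S} {ts : List (RTree S)} {i : ℕ} {ti t' : RTree S}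
    (hi : ts[i]? = some ti)
    (hiff : EvalDefIff M (RTree.map some t') (RTree.map some ti)) (q : Q) :
    (∃ w, MEval M q (RTree.map some (RTree.node a (ts.set i t'))) w) ↔
    (∃ w, MEval M q (RTree.map some (RTree.node a ts)) w) := by
  have hlen : i < (RTree.mapList some ts).length := by
    rw [RTree.mapList_eq, List.length_map]
    exact (List.getElem?_eq_some_iff.mp hi).1
  have hss2i : (RTree.mapList some ts)[i]? = some (RTree.map some ti) := by
    rw [RTree.mapList_getElem?, hi]; rfl
  simp only [RTree.map, RTree.mapList_set]
  rw [eval_node_iff, eval_node_iff]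
  constructor
  · rintro ⟨rhs, hr, w, hw⟩
    refine ⟨rhs, hr, ?_⟩
    refine mexpand_transfer hw _ ?_
    intro j a' hj
    rcases eq_or_ne i j with rfl | hne
    · rw [List.getElem?_set_self hlen] at hj
      injection hj with hj; subst hj
      exact ⟨_, hss2i, hiff⟩
    · rw [List.getElem?_set, if_neg hne] at hj
      exact ⟨a', hj, fun q => Iff.rfl⟩
  · rintro ⟨rhs, hr, w, hw⟩
    refine ⟨rhs, hr, ?_⟩
    refine mexpand_transfer hw _ ?_
    intro j a' hj
    rcases eq_or_ne i j with rfl | hne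
    · rw [hss2i] at hj
      injection hj with hj; subst hj
      exact ⟨_, List.getElem?_set_self hlen, fun q => (hiff q).symm⟩
    · exact ⟨a', by rw [List.getElem?_set, if_neg hne]; exact hj, fun q => Iff.rfl⟩

theorem rhsHeight_pos (r : MRhs Q D) : 1 ≤ rhsHeight r := by
  cases r <;> simp [rhsHeight]
end Ev4

section MainPre
variable {S : Type}

theorem replaceAt_cons_shape {s : RTree S} {i : ℕ} {u' : List ℕ} {r p : RTree (Option S)}
    (h : RTree.ReplaceAt (RTree.map some s) (i :: u') r p) :
    ∃ (σ : S) (ss : List (RTree (Option S))), p = RTree.node (some σ) ss := by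
  cases s with
  | node a0 ts0 =>
    simp only [RTree.map] at h
    cases h with
    | child hi hrep => exact ⟨a0, _, rfl⟩
end MainPre


/-! ## Statement 1

Equivalent deterministic top-down tree transducers `M1, M2` with common domain `D`
have height-balance bounded by `c = 2^(|Q1|+|Q2|) · h`, where `h` is the maximal
height of a right-hand side of a rule: for every `s ∈ D` and node `u` of `s`,
`|height(M1(s[u←x])) − height(M2(s[u←x]))| ≤ c`. -/
theorem equivalent_tdtt_bounded_height_balance {Q1 Q2 S D : Type}
    [Fintype Q1] [Fintype Q2] [Fintype S] [Fintype D]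
    (M1 : MTT Q1 S D) (M2 : MTT Q2 S D)
    (hp1 : MTT.Proper M1) (hp2 : MTT.Proper M2)
    (htd1 : IsTopDown M1) (htd2 : IsTopDown M2)
    (hS : M1.rkS = M2.rkS) (hD : M1.rkD = M2.rkD)
    (hequiv : MTT.tau M1 = MTT.tau M2)
    (h : ℕ)
    (hmax1 : ∀ q σ r, M1.rules q σ = some r → rhsHeight r ≤ h)
    (hmax2 : ∀ q σ r, M2.rules q σ = some r → rhsHeight r ≤ h) :
    ∀ s u pt, (∃ t, (s, t) ∈ MTT.tau M1) →
      RTree.ReplaceAt (RTree.map some s) u xLeaf pt →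
      ∀ ξ1 ξ2, MEval M1 M1.init pt ξ1 → MEval M2 M2.init pt ξ2 →
        |(ξ1.height : ℤ) - (ξ2.height : ℤ)| ≤
          2 ^ (Fintype.card Q1 + Fintype.card Q2) * h := by
  intro s u pt hex hrep ξ1 ξ2 hev1 hev2
  classical
  obtain ⟨t, hts⟩ := hex
  obtain ⟨hwfs, hev1full⟩ := hts
  have hts2 : (s, t) ∈ MTT.tau M2 := hequiv ▸ ⟨hwfs, hev1full⟩
  obtain ⟨hwfs2, hev2full⟩ := hts2
  rcases u with _ | ⟨i, u'⟩
  · have hpt : pt = xLeaf := by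
      generalize RTree.map some s = w at hrep
      cases hrep
      rfl
    subst hpt
    cases hev1
    cases hev2
    simp only [RTree.height, RTree.heightList, htd1 M1.init, htd2 M2.init,
      List.range_zero, List.map_nil]
    simp only [sub_self, abs_zero]
    positivity
  · have hh : 1 ≤ h := by
      obtain ⟨σ, ss, hpt⟩ := replaceAt_cons_shape hrep
      subst hpt
      cases hev1 with
      | step hr hexp => exact le_trans (rhsHeight_pos _) (hmax1 _ _ _ hr)
    obtain ⟨svm, hsvm⟩ := RTree.subtreeAt_of_replaceAt hrep
    obtain ⟨sv, hsv, rfl⟩ := subtreeAt_map_inv hsvm s rfl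
    have hwfsv : RTree.WF M1.rkS sv := RTree.WF.subtreeAt hsv hwfs
    have hR1 : RRel (RTree.map some sv) pt (RTree.map some s) :=
      Or.inr ⟨RTree.map some s, i :: u', noneFree_map_some s, hrep, RTree.replaceAt_self hsvm⟩
    have hdef1 := meval_calls_defined hp1 htd1 hev1 _ _ hR1 hev1full
    have hdef2 := meval_calls_defined hp2 htd2 hev2 _ _ hR1 hev2full
    set F : RTree S → ((Q1 → Bool) × (Q2 → Bool)) := fun w =>
      (fun q => decide (∃ v, MEval M1 q (RTree.map some w) v),
       fun q => decide (∃ v, MEval M2 q (RTree.map some w) v)) with hF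
    have HF : ∀ (a2 : S) (ts2 : List (RTree S)) (j : ℕ) (tj t2 : RTree S),
        ts2[j]? = some tj → F t2 = F tj →
        F (RTree.node a2 (ts2.set j t2)) = F (RTree.node a2 ts2) := by
      intro a2 ts2 j tj t2 hj hFt
      have hiff1 : EvalDefIff M1 (RTree.map some t2) (RTree.map some tj) := fun q =>
        decide_eq_decide.mp (congrFun (congrArg Prod.fst hFt) q)
      have hiff2 : EvalDefIff M2 (RTree.map some t2) (RTree.map some tj) := fun q =>
        decide_eq_decide.mp (congrFun (congrArg Prod.snd hFt) q)
      simp only [hF]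
      refine Prod.ext ?_ ?_ <;> funext q
      · rw [decide_eq_decide]
        exact defIff_node hj hiff1 q
      · rw [decide_eq_decide]
        exact defIff_node hj hiff2 q
    obtain ⟨s2, hwf2, hFeq, hht2⟩ := RTree.exists_small F M1.rkS HF sv hwfsv
    have hcard : Fintype.card ((Q1 → Bool) × (Q2 → Bool)) =
        2 ^ (Fintype.card Q1 + Fintype.card Q2) := by
      rw [Fintype.card_prod, Fintype.card_fun, Fintype.card_fun, Fintype.card_bool, pow_add]
    have hdi1 : ∀ q', HasSt q' ξ1 → ∃ v, MEval M1 q' (RTree.map some s2) v := by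
      intro q' hq'
      have hd := congrFun (congrArg Prod.fst hFeq) q'
      exact (decide_eq_decide.mp hd).mpr (hdef1 q' hq')
    have hdi2 : ∀ q', HasSt q' ξ2 → ∃ v, MEval M2 q' (RTree.map some s2) v := by
      intro q' hq'
      have hd := congrFun (congrArg Prod.snd hFeq) q'
      exact (decide_eq_decide.mp hd).mpr (hdef2 q' hq')
    set g1 : Q1 → RTree (PL Q1 D) := fun q =>
      if hq : ∃ v, MEval M1 q (RTree.map some s2) v then hq.choose
      else RTree.node (PL.pr 0) [] with hg1def
    set g2 : Q2 → RTree (PL Q2 D) := fun q =>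
      if hq : ∃ v, MEval M2 q (RTree.map some s2) v then hq.choose
      else RTree.node (PL.pr 0) [] with hg2def
    have hg1 : ∀ q', HasSt q' ξ1 → MEval M1 q' (RTree.map some s2) (g1 q') := by
      intro q' hq'
      have hq := hdi1 q' hq'
      simp only [hg1def]
      rw [dif_pos hq]
      exact hq.choose_spec
    have hg2 : ∀ q', HasSt q' ξ2 → MEval M2 q' (RTree.map some s2) (g2 q') := by
      intro q' hq'
      have hq := hdi2 q' hq'
      simp only [hg2def]
      rw [dif_pos hq]
      exact hq.choose_spec
    obtain ⟨s_new, hsnew⟩ := RTree.replaceAt_of_subtreeAt hsv s2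
    have hwfnew : RTree.WF M1.rkS s_new := RTree.WF.replaceAt hsnew hwfs hwf2
    have hR2 : RRel (RTree.map some s2) pt (RTree.map some s_new) :=
      Or.inr ⟨RTree.map some s, i :: u', noneFree_map_some s, hrep, replaceAt_map hsnew⟩
    have hcomp1 := meval_compose hp1 htd1 hev1 _ hR2 hg1
    have hcomp2 := meval_compose hp2 htd2 hev2 _ hR2 hg2
    have hgood1 : Good ξ1 := meval_good hp1 htd1 hev1
    have hgood2 : Good ξ2 := meval_good hp2 htd2 hev2
    have hsf1 : StFree (stsubst g1 ξ1) := stFree_stsubst fun q' hq' =>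
      meval_stFree hp1 htd1 (hg1 q' hq') (noneFree_map_some s2)
    have hgg1 : Good (stsubst g1 ξ1) := good_stsubst hgood1 fun q' hq' =>
      meval_good hp1 htd1 (hg1 q' hq')
    obtain ⟨t1, ht1⟩ := eq_map_out hgg1 hsf1
    have htau1 : (s_new, t1) ∈ MTT.tau M1 := ⟨hwfnew, by rw [← ht1]; exact hcomp1⟩
    have htau2 : (s_new, t1) ∈ MTT.tau M2 := hequiv ▸ htau1
    have hH : RTree.height (stsubst g2 ξ2) = RTree.height (stsubst g1 ξ1) := by
      rw [ht1, meval_det hcomp2 _ htau2.2, RTree.height_map, RTree.height_map]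
    have hB1 : 1 ≤ h * RTree.height s2 := by
      have := Nat.mul_le_mul hh (RTree.height_pos s2)
      simpa using this
    have hb1 : ∀ q', HasSt q' ξ1 → RTree.height (g1 q') ≤ h * RTree.height s2 := by
      intro q' hq'
      have hm := meval_height hp1 htd1 hh hmax1 (hg1 q' hq')
      rwa [RTree.height_map] at hm
    have hb2 : ∀ q', HasSt q' ξ2 → RTree.height (g2 q') ≤ h * RTree.height s2 := by
      intro q' hq'
      have hm := meval_height hp2 htd2 hh hmax2 (hg2 q' hq')
      rwa [RTree.height_map] at hm
    have hup1 : RTree.height (stsubst g1 ξ1) + 1 ≤ RTree.height ξ1 + h * RTree.height s2 :=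
      stsubst_height_le hB1 hgood1 hb1
    have hup2 : RTree.height (stsubst g2 ξ2) + 1 ≤ RTree.height ξ2 + h * RTree.height s2 :=
      stsubst_height_le hB1 hgood2 hb2
    have hlo1 : RTree.height ξ1 ≤ RTree.height (stsubst g1 ξ1) := height_le_stsubst hgood1
    have hlo2 : RTree.height ξ2 ≤ RTree.height (stsubst g2 ξ2) := height_le_stsubst hgood2
    rw [hH] at hup2 hlo2
    have hcap : h * RTree.height s2 ≤ 2 ^ (Fintype.card Q1 + Fintype.card Q2) * h := by
      rw [Nat.mul_comm]
      exact Nat.mul_le_mul_right h (hcard ▸ hht2)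
    have key1 : RTree.height ξ1 ≤ RTree.height ξ2 +
        2 ^ (Fintype.card Q1 + Fintype.card Q2) * h := by
      have h1 : RTree.height ξ1 + 1 ≤ RTree.height ξ2 + h * RTree.height s2 :=
        le_trans (Nat.add_le_add_right hlo1 1) hup2
      have h2 := Nat.add_le_add_left hcap (RTree.height ξ2)
      omega
    have key2 : RTree.height ξ2 ≤ RTree.height ξ1 +
        2 ^ (Fintype.card Q1 + Fintype.card Q2) * h := by
      have h1 : RTree.height ξ2 + 1 ≤ RTree.height ξ1 + h * RTree.height s2 :=
        le_trans (Nat.add_le_add_right hlo2 1) hup1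
      have h2 := Nat.add_le_add_left hcap (RTree.height ξ1)
      omega
    rw [abs_sub_le_iff]
    have hcast : ((2 ^ (Fintype.card Q1 + Fintype.card Q2) * h : ℕ) : ℤ) =
        2 ^ (Fintype.card Q1 + Fintype.card Q2) * (h : ℤ) := by
      push_cast
      ring
    constructor
    · have h1 : (RTree.height ξ1 : ℤ) ≤ (RTree.height ξ2 : ℤ) +
          ((2 ^ (Fintype.card Q1 + Fintype.card Q2) * h : ℕ) : ℤ) := by
        exact_mod_cast key1
      rw [hcast] at h1
      linarith
    · have h1 : (RTree.height ξ2 : ℤ) ≤ (RTree.height ξ1 : ℤ) +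
          ((2 ^ (Fintype.card Q1 + Fintype.card Q2) * h : ℕ) : ℤ) := by
        exact_mod_cast key2
      rw [hcast] at h1
      linarith
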